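/- Let H be the hyperplane x_1 = r in R^n with 2 ≤ r ≤ n-1. Then for every permutation σ ∈ S_n viewed as the point (σ(1),...,σ(n)): σ lies in the halfspace {x_1 ≤ r} if and only if σ ≤ r·ω_r in the Bruhat order, where r·ω_r denotes the permutation with one-line notation r, n, n-1, ..., r+1, r-1, ..., 2, 1 (r first, then all other values in decreasing order). -/

import Mathlib

/-- Number of inversions (Coxeter length) of a permutation of `Fin n`. -/
def invCount {n : ℕ} (σ : Equiv.Perm (Fin n)) : ℕ :=
  ((Finset.univ : Finset (Fin n × Fin n)).filter
    (fun p => p.1 < p.2 ∧ σ p.2 < σ p.1)).card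

/-- Covering relation of the strong Bruhat order: multiply by a transposition
(on values) and increase the length by exactly one. -/
def BruhatCover {n : ℕ} (u v : Equiv.Perm (Fin n)) : Prop :=
  (∃ a b : Fin n, a ≠ b ∧ v = Equiv.swap a b * u) ∧ invCount v = invCount u + 1

/-- The strong Bruhat order on `Equiv.Perm (Fin n)`. -/
def BruhatLE {n : ℕ} : Equiv.Perm (Fin n) → Equiv.Perm (Fin n) → Prop :=
  Relation.ReflTransGen BruhatCover

/-- Sum of the first `j` one-line values of `σ` (values taken in `{1, …, n}`). -/
def firstSum {n : ℕ} (σ : Equiv.Perm (Fin n)) (j : ℕ) : ℕ :=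
  ∑ i ∈ Finset.univ.filter (fun i : Fin n => (i : ℕ) < j), ((σ i : ℕ) + 1)

namespace BruhatAux

open Finset Equiv

variable {n : ℕ}

def invSet (σ : Equiv.Perm (Fin n)) : Finset (Fin n × Fin n) :=
  Finset.univ.filter (fun x => x.1 < x.2 ∧ σ x.2 < σ x.1)

lemma invCount_eq (σ : Equiv.Perm (Fin n)) : invCount σ = (invSet σ).card := rfl

lemma mem_invSet {σ : Equiv.Perm (Fin n)} {x : Fin n × Fin n} :
    x ∈ invSet σ ↔ x.1 < x.2 ∧ σ x.2 < σ x.1 := by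
  simp [invSet]

lemma master (u s : Equiv.Perm (Fin n)) (hs : ∀ x, s (s x) = x) :
    invCount (u * s) + 2 * ((invSet u ∩ invSet s).card) = invCount u + invCount s := by
  set F := invSet s with hF
  set v := u * s with hv
  have hsinj : Function.Injective s := s.injective
  have hvap : ∀ x, v x = u (s x) := fun x => rfl
  have h1 : (invSet v \ F).card = (invSet u \ F).card := by
    apply card_nbij' (fun x => (s x.1, s x.2)) (fun x => (s x.1, s x.2))
    · rintro ⟨i, j⟩ hx
      simp only [Finset.mem_coe, mem_sdiff, mem_invSet, hF] at hx ⊢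
      obtain ⟨⟨hij, hinv⟩, hnF⟩ := hx
      have hsij : s i < s j := by
        rcases lt_trichotomy (s i) (s j) with h | h | h
        · exact h
        · exact absurd (hsinj h) (ne_of_lt hij)
        · exact absurd ⟨hij, h⟩ hnF
      refine ⟨⟨hsij, by simpa [hs, hvap] using hinv⟩, ?_⟩
      rintro ⟨-, h2⟩
      simp only [hs] at h2
      exact absurd hij (not_lt.2 h2.le)
    · rintro ⟨i, j⟩ hx
      simp only [Finset.mem_coe, mem_sdiff, mem_invSet, hF] at hx ⊢
      obtain ⟨⟨hij, hinv⟩, hnF⟩ := hx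
      have hsij : s i < s j := by
        rcases lt_trichotomy (s i) (s j) with h | h | h
        · exact h
        · exact absurd (hsinj h) (ne_of_lt hij)
        · exact absurd ⟨hij, h⟩ hnF
      refine ⟨⟨hsij, by simp only [hvap, hs]; exact hinv⟩, ?_⟩
      rintro ⟨-, h2⟩
      simp only [hs] at h2
      exact absurd hij (not_lt.2 h2.le)
    · rintro ⟨i, j⟩ _; simp [hs]
    · rintro ⟨i, j⟩ _; simp [hs]
  have h2 : (invSet v ∩ F).card = (F \ invSet u).card := by
    apply card_nbij' (fun x => (s x.2, s x.1)) (fun x => (s x.2, s x.1))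
    · rintro ⟨i, j⟩ hx
      simp only [Finset.mem_coe, mem_inter, mem_sdiff, mem_invSet, hF] at hx ⊢
      obtain ⟨⟨hij, hinv⟩, hij2, hs2⟩ := hx
      refine ⟨⟨hs2, by simpa [hs] using hij⟩, ?_⟩
      rintro ⟨-, h3⟩
      exact absurd hinv (not_lt.2 h3.le)
    · rintro ⟨i, j⟩ hx
      simp only [Finset.mem_coe, mem_inter, mem_sdiff, mem_invSet, hF] at hx ⊢
      obtain ⟨⟨hij, hs2⟩, hnInv⟩ := hx
      have huij : u i < u j := by
        rcases lt_trichotomy (u i) (u j) with h | h | h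
        · exact h
        · exact absurd (u.injective h) (ne_of_lt hij)
        · exact absurd ⟨hij, h⟩ hnInv
      exact ⟨⟨hs2, by simp only [hvap, hs]; exact huij⟩, by simpa [hs] using hs2, by simpa [hs] using hij⟩
    · rintro ⟨i, j⟩ _; simp [hs]
    · rintro ⟨i, j⟩ _; simp [hs]
  have e1 : (invSet v ∩ F).card + (invSet v \ F).card = invCount v :=
    card_inter_add_card_sdiff _ _
  have e2 : (invSet u ∩ F).card + (invSet u \ F).card = invCount u :=
    card_inter_add_card_sdiff _ _
  have e3 : (F ∩ invSet u).card + (F \ invSet u).card = invCount s :=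
    card_inter_add_card_sdiff _ _
  have e4 : (F ∩ invSet u).card = (invSet u ∩ F).card := by rw [inter_comm]
  omega

end BruhatAux

namespace Step2
open BruhatAux Finset Equiv
variable {n : ℕ}

lemma invSet_swap_mem {p q : Fin n} (hpq : p < q) (x : Fin n × Fin n) :
    x ∈ invSet (Equiv.swap p q) ↔
      (x.1 = p ∧ x.2 ∈ Finset.Ioo p q) ∨ (x.1 ∈ Finset.Ioo p q ∧ x.2 = q) ∨ x = (p, q) := by
  obtain ⟨i, j⟩ := x
  rw [mem_invSet]
  have hpq' := hpq
  simp only [Finset.mem_Ioo, Prod.mk.injEq]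
  rw [Equiv.swap_apply_def, Equiv.swap_apply_def]
  split_ifs <;>
    simp only [Fin.lt_def, Fin.ext_iff] at * <;> omega

lemma invSet_swap_eq {p q : Fin n} (hpq : p < q) :
    invSet (Equiv.swap p q) =
      insert ((p, q) : Fin n × Fin n)
        (((Finset.Ioo p q).image fun j => (p, j)) ∪ ((Finset.Ioo p q).image fun j => (j, q))) := by
  ext x
  rw [invSet_swap_mem hpq]
  simp only [Finset.mem_insert, Finset.mem_union, Finset.mem_image]
  constructor
  · rintro (⟨h1, h2⟩ | ⟨h1, h2⟩ | h)
    · exact Or.inr (Or.inl ⟨x.2, h2, Prod.ext h1.symm rfl⟩)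
    · exact Or.inr (Or.inr ⟨x.1, h1, Prod.ext rfl h2.symm⟩)
    · exact Or.inl h
  · rintro (h | ⟨j, hj, rfl⟩ | ⟨j, hj, rfl⟩)
    · exact Or.inr (Or.inr h)
    · exact Or.inl ⟨rfl, hj⟩
    · exact Or.inr (Or.inl ⟨hj, rfl⟩)

lemma invCount_swap {p q : Fin n} (hpq : p < q) :
    invCount (Equiv.swap p q) = 2 * (Finset.Ioo p q).card + 1 := by
  rw [invCount_eq, invSet_swap_eq hpq]
  have hd : Disjoint ((Finset.Ioo p q).image fun j => ((p, j) : Fin n × Fin n))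
      ((Finset.Ioo p q).image fun j => ((j, q) : Fin n × Fin n)) := by
    rw [Finset.disjoint_left]
    rintro x hx1 hx2
    simp only [Finset.mem_image] at hx1 hx2
    obtain ⟨j, hj, rfl⟩ := hx1
    obtain ⟨j', hj', he⟩ := hx2
    rw [Prod.mk.injEq] at he
    rw [he.1] at hj'
    exact absurd (Finset.mem_Ioo.1 hj').1 (lt_irrefl p)
  have hnm : ((p, q) : Fin n × Fin n) ∉
      ((Finset.Ioo p q).image fun j => ((p, j) : Fin n × Fin n)) ∪
        ((Finset.Ioo p q).image fun j => ((j, q) : Fin n × Fin n)) := by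
    intro hmem
    rcases Finset.mem_union.1 hmem with h | h <;>
      simp only [Finset.mem_image, Prod.mk.injEq] at h
    · obtain ⟨j, hj, -, h2⟩ := h
      rw [h2] at hj
      exact absurd (Finset.mem_Ioo.1 hj).2 (lt_irrefl q)
    · obtain ⟨j, hj, h2, -⟩ := h
      rw [h2] at hj
      exact absurd (Finset.mem_Ioo.1 hj).1 (lt_irrefl p)
  rw [Finset.card_insert_of_notMem hnm, Finset.card_union_of_disjoint hd,
    Finset.card_image_of_injective _ (fun a b h => by simpa using h),
    Finset.card_image_of_injective _ (fun a b h => by simpa using (Prod.mk.injEq _ _ _ _ ▸ h).1)]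
  omega

end Step2

namespace Step3
open BruhatAux Step2 Finset Equiv
variable {n : ℕ}

/-- The canonical map from middle indices into the inversion intersection. -/
private def rho (u : Equiv.Perm (Fin n)) (p q : Fin n) (j : Fin n) : Fin n × Fin n :=
  if u j < u p then (p, j) else (j, q)

lemma rho_mem {u : Equiv.Perm (Fin n)} {p q j : Fin n} (hpq : p < q) (hj : j ∈ Finset.Ioo p q)
    (halt : u j < u p ∨ u q < u j) : rho u p q j ∈ invSet u ∩ invSet (Equiv.swap p q) := by
  obtain ⟨hj1, hj2⟩ := Finset.mem_Ioo.1 hj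
  rw [Finset.mem_inter, mem_invSet, invSet_swap_mem hpq]
  unfold rho
  split_ifs with h
  · exact ⟨⟨hj1, h⟩, Or.inl ⟨rfl, hj⟩⟩
  · have h2 : u q < u j := halt.resolve_left h
    exact ⟨⟨hj2, h2⟩, Or.inr (Or.inl ⟨hj, rfl⟩)⟩

lemma rho_injOn (u : Equiv.Perm (Fin n)) (p q : Fin n) :
    Set.InjOn (rho u p q) (Finset.Ioo p q : Set (Fin n)) := by
  intro a ha b hb hab
  simp only [Finset.coe_Ioo, Set.mem_Ioo] at ha hb
  unfold rho at hab
  split_ifs at hab with h1 h2 h2 <;> rw [Prod.mk.injEq] at hab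
  · exact hab.2
  · exact absurd hab.1 (ne_of_lt hb.1)
  · exact absurd hab.1 (ne_of_lt ha.1).symm
  · exact hab.1

lemma rho_ne_pq {u : Equiv.Perm (Fin n)} {p q j : Fin n} (hj : j ∈ Finset.Ioo p q) :
    rho u p q j ≠ (p, q) := by
  obtain ⟨hj1, hj2⟩ := Finset.mem_Ioo.1 hj
  unfold rho
  split_ifs <;> intro h <;> rw [Prod.mk.injEq] at h
  · exact absurd h.2 (ne_of_lt hj2)
  · exact absurd h.1 (ne_of_lt hj1).symm

lemma inter_key {u : Equiv.Perm (Fin n)} {p q : Fin n} (hpq : p < q) (hval : u p < u q) :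
    ∀ z : Fin n × Fin n, z ∈ invSet u ∩ invSet (Equiv.swap p q) →
      (z.1 = p ∧ z.2 ∈ Finset.Ioo p q ∧ u z.2 < u p) ∨
      (z.1 ∈ Finset.Ioo p q ∧ z.2 = q ∧ u q < u z.1) := by
  intro z hz
  rw [Finset.mem_inter, mem_invSet, invSet_swap_mem hpq] at hz
  obtain ⟨⟨hlt, hinv⟩, (⟨h1, h2⟩ | ⟨h1, h2⟩ | h0)⟩ := hz
  · exact Or.inl ⟨h1, h2, h1 ▸ hinv⟩
  · exact Or.inr ⟨h1, h2, h2 ▸ hinv⟩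
  · subst h0
    exact absurd hinv (not_lt.2 hval.le)

lemma inter_card_le {u : Equiv.Perm (Fin n)} {p q : Fin n} (hpq : p < q) (hval : u p < u q) :
    (invSet u ∩ invSet (Equiv.swap p q)).card ≤ (Finset.Ioo p q).card := by
  apply Finset.card_le_card_of_injOn (fun z => if z.1 = p then z.2 else z.1)
  · intro z hz
    rcases inter_key hpq hval z hz with ⟨h1, h2, -⟩ | ⟨h1, h2, -⟩
    · simpa [h1] using h2
    · have hne : z.1 ≠ p := fun he => absurd (Finset.mem_Ioo.1 (he ▸ h1)).1 (lt_irrefl p)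
      simpa [hne] using h1
  · intro x hx y hy hxy
    have hx' := inter_key hpq hval x (by simpa using hx)
    have hy' := inter_key hpq hval y (by simpa using hy)
    simp only at hxy
    rcases hx' with ⟨hx1, hx2, hx3⟩ | ⟨hx1, hx2, hx3⟩ <;>
      rcases hy' with ⟨hy1, hy2, hy3⟩ | ⟨hy1, hy2, hy3⟩
    · rw [if_pos hx1, if_pos hy1] at hxy
      exact Prod.ext (hx1.trans hy1.symm) hxy
    · have hy1p : y.1 ≠ p := fun he => absurd (Finset.mem_Ioo.1 (he ▸ hy1)).1 (lt_irrefl p)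
      rw [if_pos hx1, if_neg hy1p] at hxy
      exact absurd (hy3.trans (hxy ▸ hx3)) (not_lt.2 hval.le)
    · have hx1p : x.1 ≠ p := fun he => absurd (Finset.mem_Ioo.1 (he ▸ hx1)).1 (lt_irrefl p)
      rw [if_neg hx1p, if_pos hy1] at hxy
      exact absurd ((hxy ▸ hx3 : u q < u y.2).trans hy3) (not_lt.2 hval.le)
    · have hy1p : y.1 ≠ p := fun he => absurd (Finset.mem_Ioo.1 (he ▸ hy1)).1 (lt_irrefl p)
      have hx1p : x.1 ≠ p := fun he => absurd (Finset.mem_Ioo.1 (he ▸ hx1)).1 (lt_irrefl p)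
      rw [if_neg hx1p, if_neg hy1p] at hxy
      exact Prod.ext hxy (hx2.trans hy2.symm)

lemma le_inter_card_weak {u : Equiv.Perm (Fin n)} {p q : Fin n} (hpq : p < q)
    (hmid : ∀ j, p < j → j < q → u j < u p ∨ u q < u j) :
    (Finset.Ioo p q).card ≤ (invSet u ∩ invSet (Equiv.swap p q)).card := by
  rw [← Finset.card_image_of_injOn (rho_injOn u p q)]
  apply Finset.card_le_card
  intro x hx
  obtain ⟨j, hj, rfl⟩ := Finset.mem_image.1 hx
  exact rho_mem hpq hj (hmid j (Finset.mem_Ioo.1 hj).1 (Finset.mem_Ioo.1 hj).2)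

lemma le_inter_card {u : Equiv.Perm (Fin n)} {p q : Fin n} (hpq : p < q) (hval : u q < u p) :
    (Finset.Ioo p q).card + 1 ≤ (invSet u ∩ invSet (Equiv.swap p q)).card := by
  have hsub : insert ((p, q) : Fin n × Fin n) ((Finset.Ioo p q).image (rho u p q)) ⊆
      invSet u ∩ invSet (Equiv.swap p q) := by
    intro x hx
    rcases Finset.mem_insert.1 hx with rfl | hx
    · rw [Finset.mem_inter, mem_invSet, invSet_swap_mem hpq]
      exact ⟨⟨hpq, hval⟩, Or.inr (Or.inr rfl)⟩
    · obtain ⟨j, hj, rfl⟩ := Finset.mem_image.1 hx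
      have halt : u j < u p ∨ u q < u j := by
        rcases lt_or_ge (u j) (u p) with h | h
        · exact Or.inl h
        · exact Or.inr (lt_of_lt_of_le hval h)
      exact rho_mem hpq hj halt
  calc (Finset.Ioo p q).card + 1
      = (insert ((p, q) : Fin n × Fin n) ((Finset.Ioo p q).image (rho u p q))).card := by
        rw [Finset.card_insert_of_notMem, Finset.card_image_of_injOn (rho_injOn u p q)]
        intro h
        obtain ⟨j, hj, hje⟩ := Finset.mem_image.1 h
        exact rho_ne_pq hj hje
    _ ≤ _ := Finset.card_le_card hsub

lemma invCount_mul_swap_lt {u : Equiv.Perm (Fin n)} {p q : Fin n} (hpq : p < q)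
    (hval : u q < u p) : invCount (u * Equiv.swap p q) < invCount u := by
  have hm := master u (Equiv.swap p q) (fun x => Equiv.swap_apply_self p q x)
  have h1 := invCount_swap (n := n) hpq
  have h2 := le_inter_card hpq hval
  omega

lemma lt_invCount_mul_swap {u : Equiv.Perm (Fin n)} {p q : Fin n} (hpq : p < q)
    (hval : u p < u q) : invCount u < invCount (u * Equiv.swap p q) := by
  have hm := master u (Equiv.swap p q) (fun x => Equiv.swap_apply_self p q x)
  have h1 := invCount_swap (n := n) hpq
  have h2 := inter_card_le hpq hval
  omega

lemma invCount_mul_swap_cover {u : Equiv.Perm (Fin n)} {p q : Fin n} (hpq : p < q)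
    (hval : u p < u q) (hmid : ∀ j, p < j → j < q → u j < u p ∨ u q < u j) :
    invCount (u * Equiv.swap p q) = invCount u + 1 := by
  have hm := master u (Equiv.swap p q) (fun x => Equiv.swap_apply_self p q x)
  have h1 := invCount_swap (n := n) hpq
  have h2 := inter_card_le hpq hval
  have h3 := le_inter_card_weak hpq hmid
  omega

end Step3

namespace Step4
open BruhatAux Step2 Step3 Finset Equiv
variable {n : ℕ}

lemma mul_swap_eq (u : Equiv.Perm (Fin n)) (p q : Fin n) :
    u * Equiv.swap p q = Equiv.swap (u p) (u q) * u :=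
  Equiv.mul_swap_eq_swap_mul u p q

lemma bruhatCover_mul_swap {u : Equiv.Perm (Fin n)} {p q : Fin n} (hpq : p < q)
    (hval : u p < u q) (hmid : ∀ j, p < j → j < q → u j < u p ∨ u q < u j) :
    BruhatCover u (u * Equiv.swap p q) :=
  ⟨⟨u p, u q, fun h => absurd h (ne_of_lt hval), (mul_swap_eq u p q)⟩,
    invCount_mul_swap_cover hpq hval hmid⟩

lemma bruhatLE_mul_swap :
    ∀ d : ℕ, ∀ (u : Equiv.Perm (Fin n)) (p q : Fin n),
      (q : ℕ) - (p : ℕ) ≤ d → p < q → u p < u q → BruhatLE u (u * Equiv.swap p q) := by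
  intro d
  induction d with
  | zero =>
    intro u p q hd hpq _
    rw [Fin.lt_def] at hpq
    omega
  | succ d ih =>
    intro u p q hd hpq hval
    by_cases hmid : ∃ j : Fin n, p < j ∧ j < q ∧ u p < u j ∧ u j < u q
    · obtain ⟨j, hpj, hjq, h1, h2⟩ := hmid
      have hpj' : (p : ℕ) < j := hpj
      have hjq' : (j : ℕ) < q := hjq
      have hd1 : (j : ℕ) - (p : ℕ) ≤ d := by omega
      have hd2 : (q : ℕ) - (j : ℕ) ≤ d := by omega
      -- step 1 : u → u * swap p j
      have s1 : BruhatLE u (u * Equiv.swap p j) := ih u p j hd1 hpj h1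
      set w1 := u * Equiv.swap p j with hw1
      have hw1j : w1 j = u p := by
        rw [hw1]; simp [Equiv.Perm.mul_apply, Equiv.swap_apply_right]
      have hw1q : w1 q = u q := by
        rw [hw1]
        simp [Equiv.Perm.mul_apply,
          Equiv.swap_apply_of_ne_of_ne (ne_of_lt (hpj.trans hjq)).symm (ne_of_lt hjq).symm]
      have hw1p : w1 p = u j := by
        rw [hw1]; simp [Equiv.Perm.mul_apply, Equiv.swap_apply_left]
      -- step 2 : w1 → w1 * swap j q
      have s2 : BruhatLE w1 (w1 * Equiv.swap j q) := by
        apply ih w1 j q hd2 hjq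
        rw [hw1j, hw1q]
        exact h1.trans h2
      set w2 := w1 * Equiv.swap j q with hw2
      have hw2p : w2 p = u j := by
        rw [hw2]
        simp [Equiv.Perm.mul_apply,
          Equiv.swap_apply_of_ne_of_ne (ne_of_lt hpj) (ne_of_lt (hpj.trans hjq))]
        exact hw1p
      have hw2j : w2 j = u q := by
        rw [hw2]
        simp [Equiv.Perm.mul_apply, Equiv.swap_apply_left]
        exact hw1q
      -- step 3 : w2 → w2 * swap p j
      have s3 : BruhatLE w2 (w2 * Equiv.swap p j) := by
        apply ih w2 p j hd1 hpj
        rw [hw2p, hw2j]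
        exact h2
      have hfinal : w2 * Equiv.swap p j = u * Equiv.swap p q := by
        rw [hw2, hw1, mul_assoc, mul_assoc]
        congr 1
        rw [← mul_assoc]
        rw [Equiv.swap_comm p j, Equiv.swap_comm j q]
        exact Equiv.swap_mul_swap_mul_swap (ne_of_lt hjq).symm (ne_of_lt hpq).symm
      rw [hfinal] at s3
      exact s1.trans (s2.trans s3)
    · push_neg at hmid
      have hmid' : ∀ j, p < j → j < q → u j < u p ∨ u q < u j := by
        intro j h1 h2
        rcases lt_trichotomy (u j) (u p) with h | h | h
        · exact Or.inl h
        · exact absurd (u.injective h) (ne_of_lt h1).symm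
        · have hle := hmid j h1 h2 h
          exact Or.inr (lt_of_le_of_ne hle fun he => (ne_of_lt h2) (u.injective he.symm))
      exact Relation.ReflTransGen.single (bruhatCover_mul_swap hpq hval hmid')

lemma cover_zero_le (hn : 0 < n) {u v : Equiv.Perm (Fin n)} (h : BruhatCover u v) :
    u ⟨0, hn⟩ ≤ v ⟨0, hn⟩ := by
  obtain ⟨⟨a, b, hab, hv⟩, hlen⟩ := h
  have hv' : v = u * Equiv.swap (u⁻¹ a) (u⁻¹ b) := by
    rw [mul_swap_eq, show u (u⁻¹ a) = a from u.apply_symm_apply a,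
      show u (u⁻¹ b) = b from u.apply_symm_apply b, hv]
  have hne : u⁻¹ a ≠ u⁻¹ b := fun h => hab (by simpa using congrArg u h)
  -- reduce to the sorted case
  suffices H : ∀ (p q : Fin n), p < q → v = u * Equiv.swap p q → u ⟨0, hn⟩ ≤ v ⟨0, hn⟩ by
    rcases lt_trichotomy (u⁻¹ a) (u⁻¹ b) with hlt | he | hgt
    · exact H _ _ hlt hv'
    · exact absurd he hne
    · exact H _ _ hgt (by rw [hv', Equiv.swap_comm])
  intro p q hpq hvpq
  have hval : u p < u q := by
    rcases lt_trichotomy (u p) (u q) with h | h | h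
    · exact h
    · exact absurd (u.injective h) (ne_of_lt hpq)
    · exfalso
      have := invCount_mul_swap_lt hpq h
      rw [← hvpq] at this
      omega
  by_cases hz : (⟨0, hn⟩ : Fin n) = p
  · subst hz
    rw [hvpq]
    have happ : (u * Equiv.swap (⟨0, hn⟩ : Fin n) q) ⟨0, hn⟩ = u q := by
      simp [Equiv.Perm.mul_apply, Equiv.swap_apply_left]
    rw [happ]
    exact hval.le
  · have hzq : (⟨0, hn⟩ : Fin n) ≠ q := by
      intro he
      rw [← he] at hpq
      exact absurd hpq (by simp [Fin.lt_def])
    rw [hvpq]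
    simp [Equiv.Perm.mul_apply, Equiv.swap_apply_of_ne_of_ne hz hzq]

lemma bruhatLE_zero_le (hn : 0 < n) {u v : Equiv.Perm (Fin n)} (h : BruhatLE u v) :
    u ⟨0, hn⟩ ≤ v ⟨0, hn⟩ := by
  induction h with
  | refl => exact le_refl _
  | tail _ hcov ih => exact ih.trans (cover_zero_le hn hcov)

lemma invCount_le_sq (σ : Equiv.Perm (Fin n)) : invCount σ ≤ n * n := by
  calc invCount σ ≤ (Finset.univ : Finset (Fin n × Fin n)).card := Finset.card_filter_le _ _
    _ = n * n := by simp

end Step4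

namespace Step5
open BruhatAux Step2 Step3 Step4 Finset Equiv

lemma range_emb {n : ℕ} (hn : 0 < n) (σ : Equiv.Perm (Fin n)) :
    Set.range (fun i : Fin (n-1) => σ ⟨(i : ℕ)+1, by have := i.isLt; omega⟩) =
      {x : Fin n | x ≠ σ ⟨0, hn⟩} := by
  ext x
  constructor
  · rintro ⟨i, rfl⟩
    simp only [Set.mem_setOf_eq]
    intro he
    have := σ.injective he
    rw [Fin.ext_iff] at this
    simp at this
  · intro hx
    simp only [Set.mem_setOf_eq] at hx
    set k := σ⁻¹ x with hk
    have hσk : σ k = x := σ.apply_symm_apply x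
    have hkz : k ≠ ⟨0, hn⟩ := by
      intro he
      rw [he] at hσk
      exact hx hσk.symm
    have hk1 : 1 ≤ (k : ℕ) := by
      rcases Nat.eq_zero_or_pos (k : ℕ) with h | h
      · exact absurd (Fin.ext h : k = ⟨0, hn⟩) hkz
      · exact h
    have hkn : (k : ℕ) < n := k.isLt
    refine ⟨⟨(k : ℕ) - 1, by omega⟩, ?_⟩
    have he2 : (⟨(k : ℕ) - 1 + 1, by omega⟩ : Fin n) = k := by
      rw [Fin.ext_iff]
      simp
      omega
    simp only [he2]
    exact hσk

lemma rOmega_anti {n r : ℕ} (hr : 2 ≤ r) (hrn : r + 1 ≤ n) (rω : Equiv.Perm (Fin n))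
    (hrω : ∀ i : Fin n, (rω i : ℕ) =
      if (i : ℕ) = 0 then r - 1
      else if (i : ℕ) ≤ n - r then n - (i : ℕ)
      else n - (i : ℕ) - 1) :
    ∀ i j : Fin n, 0 < (i : ℕ) → i < j → rω j < rω i := by
  intro i j hi hij
  have hij2 : (i : ℕ) < (j : ℕ) := hij
  have hjn : (j : ℕ) < n := j.isLt
  rw [Fin.lt_def, hrω i, hrω j]
  split_ifs <;> omega

lemma eq_rOmega {n r : ℕ} (hr : 2 ≤ r) (hrn : r + 1 ≤ n) (hn : 0 < n) (rω : Equiv.Perm (Fin n))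
    (hrω : ∀ i : Fin n, (rω i : ℕ) =
      if (i : ℕ) = 0 then r - 1
      else if (i : ℕ) ≤ n - r then n - (i : ℕ)
      else n - (i : ℕ) - 1)
    (σ : Equiv.Perm (Fin n)) (h0 : (σ ⟨0, hn⟩ : ℕ) = r - 1)
    (hanti : ∀ p q : Fin n, 0 < (p : ℕ) → p < q → σ q < σ p) : σ = rω := by
  have hz0 : σ ⟨0, hn⟩ = rω ⟨0, hn⟩ := by
    rw [Fin.ext_iff, h0, hrω ⟨0, hn⟩]
    simp
  have hf : StrictAnti (fun i : Fin (n-1) => σ ⟨(i : ℕ)+1, by have := i.isLt; omega⟩) := by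
    intro i j hij
    apply hanti
    · simp
    · rw [Fin.lt_def]
      simp
      exact hij
  have hg : StrictAnti (fun i : Fin (n-1) => rω ⟨(i : ℕ)+1, by have := i.isLt; omega⟩) := by
    intro i j hij
    apply rOmega_anti hr hrn (rω := rω) hrω
    · simp
    · rw [Fin.lt_def]
      simp
      exact hij
  have hrange : Set.range (fun i : Fin (n-1) => σ ⟨(i : ℕ)+1, by have := i.isLt; omega⟩) =
      Set.range (fun i : Fin (n-1) => rω ⟨(i : ℕ)+1, by have := i.isLt; omega⟩) := by
    rw [range_emb hn σ, range_emb hn rω, hz0]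
  have hfg := (StrictAnti.range_inj hf hg).1 hrange
  apply Equiv.ext
  intro i
  by_cases hi : (i : ℕ) = 0
  · have : i = ⟨0, hn⟩ := Fin.ext hi
    rw [this]
    exact hz0
  · have hin : (i : ℕ) < n := i.isLt
    have hi1 : 1 ≤ (i : ℕ) := by omega
    have hieq : i = ⟨((⟨(i : ℕ) - 1, by omega⟩ : Fin (n-1)) : ℕ) + 1, by simp; omega⟩ := by
      rw [Fin.ext_iff]
      simp
      omega
    rw [hieq]
    exact congrFun hfg ⟨(i : ℕ) - 1, by omega⟩

lemma move {n r : ℕ} (hr : 2 ≤ r) (hrn : r + 1 ≤ n) (hn : 0 < n) (rω : Equiv.Perm (Fin n))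
    (hrω : ∀ i : Fin n, (rω i : ℕ) =
      if (i : ℕ) = 0 then r - 1
      else if (i : ℕ) ≤ n - r then n - (i : ℕ)
      else n - (i : ℕ) - 1)
    (σ : Equiv.Perm (Fin n)) (hσ0 : (σ ⟨0, hn⟩ : ℕ) + 1 ≤ r) (hne : σ ≠ rω) :
    ∃ τ : Equiv.Perm (Fin n), BruhatLE σ τ ∧ invCount σ < invCount τ ∧
      (τ ⟨0, hn⟩ : ℕ) + 1 ≤ r := by
  set z : Fin n := ⟨0, hn⟩ with hz
  rcases Nat.lt_or_ge (σ z : ℕ) (r - 1) with hlt | hge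
  · -- the first value can be raised to r - 1
    have hwlt : r - 1 < n := by omega
    set w : Fin n := ⟨r - 1, hwlt⟩ with hw
    set q := σ⁻¹ w with hqdef
    have hq : σ q = w := σ.apply_symm_apply w
    have hqz : q ≠ z := by
      intro he
      rw [he] at hq
      rw [hq] at hlt
      simp [hw] at hlt
    have hzq : z < q := by
      rw [Fin.lt_def]
      have hq0 : (q : ℕ) ≠ 0 := fun h => hqz (Fin.ext h)
      simp only [hz]
      omega
    have hval : σ z < σ q := by
      rw [Fin.lt_def, hq]
      exact hlt
    refine ⟨σ * Equiv.swap z q, ?_, lt_invCount_mul_swap hzq hval, ?_⟩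
    · exact bruhatLE_mul_swap n σ z q (by omega) hzq hval
    · have happ : (σ * Equiv.swap z q) z = σ q := by
        simp [Equiv.Perm.mul_apply, Equiv.swap_apply_left]
      rw [happ, hq]
      simp [hw]
      omega
  · -- the first value equals r - 1
    have h0 : (σ z : ℕ) = r - 1 := by omega
    by_cases hex : ∃ p q : Fin n, 0 < (p : ℕ) ∧ p < q ∧ σ p < σ q
    · obtain ⟨p, q, hp0, hpq, hval⟩ := hex
      have hzp : z ≠ p := by
        intro he
        rw [← he] at hp0
        simp [hz] at hp0
      have hzq : z ≠ q := by
        intro he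
        rw [← he] at hpq
        exact absurd hpq (by simp [hz, Fin.lt_def])
      refine ⟨σ * Equiv.swap p q, ?_, lt_invCount_mul_swap hpq hval, ?_⟩
      · exact bruhatLE_mul_swap n σ p q (by omega) hpq hval
      · have happ : (σ * Equiv.swap p q) z = σ z := by
          simp [Equiv.Perm.mul_apply, Equiv.swap_apply_of_ne_of_ne hzp hzq]
        rw [happ]
        omega
    · exfalso
      apply hne
      apply eq_rOmega hr hrn hn rω hrω σ h0
      intro p q hp0 hpq
      push_neg at hex
      have hle : σ q ≤ σ p := hex p q hp0 hpq
      exact lt_of_le_of_ne hle fun he => (ne_of_lt hpq) (σ.injective he).symm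

lemma reach {n r : ℕ} (hr : 2 ≤ r) (hrn : r + 1 ≤ n) (hn : 0 < n) (rω : Equiv.Perm (Fin n))
    (hrω : ∀ i : Fin n, (rω i : ℕ) =
      if (i : ℕ) = 0 then r - 1
      else if (i : ℕ) ≤ n - r then n - (i : ℕ)
      else n - (i : ℕ) - 1) :
    ∀ k : ℕ, ∀ σ : Equiv.Perm (Fin n), n * n ≤ invCount σ + k →
      (σ ⟨0, hn⟩ : ℕ) + 1 ≤ r → BruhatLE σ rω := by
  intro k
  induction k with
  | zero =>
    intro σ hk h0
    by_cases hne : σ = rω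
    · rw [hne]; exact Relation.ReflTransGen.refl
    · obtain ⟨τ, -, hlt, -⟩ := move hr hrn hn rω hrω σ h0 hne
      have := invCount_le_sq τ
      omega
  | succ k ih =>
    intro σ hk h0
    by_cases hne : σ = rω
    · rw [hne]; exact Relation.ReflTransGen.refl
    · obtain ⟨τ, hle, hlt, hτ0⟩ := move hr hrn hn rω hrω σ h0 hne
      exact hle.trans (ih τ (by omega) hτ0)

end Step5

theorem halfspace_iff_bruhat_le_rOmega (n r : ℕ) (hr : 2 ≤ r) (hrn : r + 1 ≤ n)
    (rω : Equiv.Perm (Fin n))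
    (hrω : ∀ i : Fin n, (rω i : ℕ) =
      if (i : ℕ) = 0 then r - 1
      else if (i : ℕ) ≤ n - r then n - (i : ℕ)
      else n - (i : ℕ) - 1)
    (σ : Equiv.Perm (Fin n)) :
    (σ ⟨0, by omega⟩ : ℕ) + 1 ≤ r ↔ BruhatLE σ rω := by
  have hn : 0 < n := by omega
  constructor
  · intro h
    exact Step5.reach hr hrn hn rω hrω (n * n) σ (by omega) h
  · intro h
    have hle := Step4.bruhatLE_zero_le hn h
    have h1 : (σ ⟨0, hn⟩ : ℕ) ≤ (rω ⟨0, hn⟩ : ℕ) := Fin.le_def.1 hle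
    have h2 : (rω ⟨0, hn⟩ : ℕ) = r - 1 := by rw [hrω]; simp
    omega
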